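/- Let A be a field. Every weighted 3-cycle C^3_ω is Cohen-Macaulay, i.e., the quotient ring R/I(C^3_ω) is Cohen-Macaulay. -/

import Mathlib

open MvPolynomial

/-- `(S, δ)` is a weighted vertex cover of the weighted graph `(G, w)`:
`δ` takes positive values on `S`, and every edge `{i, j}` is covered by an
endpoint lying in `S` whose weight is at most the weight of the edge. -/
def IsWVC {V : Type*} (G : SimpleGraph V) (w : Sym2 V → ℕ) (S : Finset V) (δ : V → ℕ) : Prop :=
  (∀ v ∈ S, 1 ≤ δ v) ∧
    ∀ i j, G.Adj i j → (i ∈ S ∧ δ i ≤ w s(i, j)) ∨ (j ∈ S ∧ δ j ≤ w s(i, j))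

/-- The order on weighted vertex covers: `(S', δ') ≤ (S, δ)` iff `S' ⊆ S` and
`δ v ≤ δ' v` for all `v ∈ S'`. -/
def WVCle {V : Type*} (S' : Finset V) (δ' : V → ℕ) (S : Finset V) (δ : V → ℕ) : Prop :=
  S' ⊆ S ∧ ∀ v ∈ S', δ v ≤ δ' v

/-- Minimal weighted vertex cover. -/
def IsMinWVC {V : Type*} (G : SimpleGraph V) (w : Sym2 V → ℕ) (S : Finset V) (δ : V → ℕ) :
    Prop :=
  IsWVC G w S δ ∧ ∀ T ε, IsWVC G w T ε → WVCle T ε S δ → WVCle S δ T ε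

/-- A weighted graph is unmixed if all its minimal weighted vertex covers have
the same cardinality. -/
def WUnmixed {V : Type*} (G : SimpleGraph V) (w : Sym2 V → ℕ) : Prop :=
  ∀ S δ T ε, IsMinWVC G w S δ → IsMinWVC G w T ε → S.card = T.card

/-- vertex cover of an (unweighted) graph. -/
def IsVC {V : Type*} (G : SimpleGraph V) (S : Finset V) : Prop :=
  ∀ i j, G.Adj i j → i ∈ S ∨ j ∈ S

def IsMinVC {V : Type*} (G : SimpleGraph V) (S : Finset V) : Prop :=
  IsVC G S ∧ ∀ T, IsVC G T → T ⊆ S → T = S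

def Unmixed {V : Type*} (G : SimpleGraph V) : Prop :=
  ∀ S T, IsMinVC G S → IsMinVC G T → S.card = T.card

/-- The weighted edge ideal. -/
noncomputable def wEdgeIdeal (A : Type*) [CommRing A] {V : Type*} (G : SimpleGraph V)
    (w : Sym2 V → ℕ) : Ideal (MvPolynomial V A) :=
  Ideal.span {m | ∃ i j, G.Adj i j ∧ m = X i ^ w s(i, j) * X j ^ w s(i, j)}

/-- The m-irreducible ideal `P(S, δ)` generated by the pure powers `Xᵥ^(δ v)`, `v ∈ S`. -/
noncomputable def PIdeal (A : Type*) [CommRing A] {V : Type*} (S : Finset V) (δ : V → ℕ) :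
    Ideal (MvPolynomial V A) :=
  Ideal.span {m | ∃ v ∈ S, m = X v ^ δ v}

/-- The monomial prime `P(S)` generated by the variables `Xᵥ`, `v ∈ S`. -/
noncomputable def PPrime (A : Type*) [CommRing A] {V : Type*} (S : Finset V) :
    Ideal (MvPolynomial V A) :=
  Ideal.span {m | ∃ v ∈ S, m = X v}

set_option synthInstance.maxHeartbeats 1000000 in
/-- Cohen-Macaulayness of the quotient of a polynomial ring over a field by a
(monomial, hence graded) ideal `I`: there is a regular sequence on `R ⧸ I`,
consisting of elements of the image of the irrelevant maximal ideal, whose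
length equals the Krull dimension of `R ⧸ I` (i.e. `depth = dim`). -/
def QuotIsCM (A : Type*) [Field A] {V : Type*} (I : Ideal (MvPolynomial V A)) : Prop :=
  ∃ rs : List (MvPolynomial V A ⧸ I),
    (∀ x ∈ rs, x ∈ (Ideal.span (Set.range (X : V → MvPolynomial V A))).map
      (Ideal.Quotient.mk I)) ∧
    RingTheory.Sequence.IsRegular (MvPolynomial V A ⧸ I) rs ∧
    (rs.length : WithBot (WithTop ℕ)) = ringKrullDim (MvPolynomial V A ⧸ I)

/-- The cycle graph on `Fin n`. -/
def cycleG (n : ℕ) : SimpleGraph (Fin n) := SimpleGraph.fromRel (fun i j => (j : ℕ) = ((i : ℕ) + 1) % n)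

/-- The path graph on `Fin n`, with edges `v_i v_{i+1}`. -/
def pathG (n : ℕ) : SimpleGraph (Fin n) :=
  SimpleGraph.fromRel (fun i j => (i : ℕ) + 1 = (j : ℕ))

/-- The suspension of a graph `G`, obtained by attaching a whisker `vᵢwᵢ` at
each vertex `vᵢ` of `G`; the copy `Sum.inl` carries `G` and `Sum.inr` carries
the whisker vertices. -/
def suspension {V : Type*} (G : SimpleGraph V) : SimpleGraph (V ⊕ V) :=
  SimpleGraph.fromRel (fun x y =>
    match x, y with
    | .inl i, .inl j => G.Adj i j
    | .inl i, .inr j => i = j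
    | _, _ => False)

namespace Stmt17Aux

variable {A : Type*} [Field A]

lemma single_add_single_le {i j : Fin 3} (hne : i ≠ j) (α β : ℕ) (m : Fin 3 →₀ ℕ) :
    Finsupp.single i α + Finsupp.single j β ≤ m ↔ α ≤ m i ∧ β ≤ m j := by
  rw [Finsupp.le_def]
  constructor
  · intro h
    refine ⟨?_, ?_⟩
    · have := h i; simpa [Finsupp.single_apply, hne.symm] using this
    · have := h j; simpa [Finsupp.single_apply, hne] using this
  · rintro ⟨h1, h2⟩ v
    rcases eq_or_ne v i with rfl | hvi
    · simpa [Finsupp.single_apply, hne.symm] using h1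
    · rcases eq_or_ne v j with rfl | hvj
      · simpa [Finsupp.single_apply, hne] using h2
      · simp [Finsupp.single_apply, Ne.symm hvi, Ne.symm hvj]

lemma X_pow_mul_X_pow (i j : Fin 3) (n : ℕ) :
    (X i ^ n * X j ^ n : MvPolynomial (Fin 3) A) =
      monomial (Finsupp.single i n + Finsupp.single j n) 1 := by
  rw [X_pow_eq_monomial, X_pow_eq_monomial, monomial_mul, one_mul]

lemma adj_iff (i j : Fin 3) : (cycleG 3).Adj i j ↔
    (i = 0 ∧ j = 1) ∨ (i = 1 ∧ j = 0) ∨ (i = 1 ∧ j = 2) ∨ (i = 2 ∧ j = 1) ∨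
    (i = 2 ∧ j = 0) ∨ (i = 0 ∧ j = 2) := by
  rw [cycleG, SimpleGraph.fromRel_adj]
  fin_cases i <;> fin_cases j <;> decide

noncomputable def psi (A : Type*) [Field A] (k : Fin 3) :
    MvPolynomial (Fin 3) A →ₐ[A] Polynomial A :=
  aeval (fun v => if v = k then Polynomial.X else 0)

lemma psi_comp (k : Fin 3) (p : Polynomial A) :
    psi A k (Polynomial.aeval (X k) p) = p := by
  have h : (psi A k).comp (Polynomial.aeval (X k)) = AlgHom.id A (Polynomial A) := by
    apply Polynomial.algHom_ext
    simp [psi]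
  have := congrArg (fun f => f p) h
  simpa using this

lemma psi_monomial (k : Fin 3) (nn : Fin 3 →₀ ℕ) (r : A) :
    psi A k (monomial nn r) =
      if ∀ v, v ≠ k → nn v = 0 then Polynomial.C r * Polynomial.X ^ (nn k) else 0 := by
  rw [psi, aeval_monomial]
  split_ifs with hpure
  · have hnn : nn = Finsupp.single k (nn k) := by
      ext v
      rcases eq_or_ne v k with rfl | hv
      · simp
      · simp [Finsupp.single_apply, Ne.symm hv, hpure v hv]
    rw [hnn, Finsupp.prod_single_index]
    · simp [Polynomial.algebraMap_eq, ← hnn]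
    · simp
  · push_neg at hpure
    obtain ⟨v, hvk, hv⟩ := hpure
    have hz : nn.prod (fun w e => (if w = k then (Polynomial.X : Polynomial A) else 0) ^ e) = 0 := by
      apply Finset.prod_eq_zero (i := v)
      · rwa [Finsupp.mem_support_iff]
      · simp [hvk, hv]
    rw [hz, mul_zero]

lemma ker_psi (k : Fin 3) :
    RingHom.ker (psi A k).toRingHom = Ideal.span (X '' {v : Fin 3 | v ≠ k}) := by
  apply le_antisymm
  · intro p hp
    rw [RingHom.mem_ker] at hp
    rw [mem_ideal_span_X_image]
    intro m hm
    by_contra hcon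
    push_neg at hcon
    have hpure : ∀ v, v ≠ k → m v = 0 := fun v hv => hcon v hv
    have key : (psi A k p).coeff (m k) = coeff m p := by
      conv_lhs => rw [p.as_sum, map_sum]
      rw [Polynomial.finset_sum_coeff]
      rw [Finset.sum_eq_single m]
      · rw [psi_monomial, if_pos hpure]
        simp
      · intro nn hnn hne
        rw [psi_monomial]
        split_ifs with hp2
        · have hkk : nn k ≠ m k := by
            intro he
            apply hne
            ext v
            rcases eq_or_ne v k with rfl | hv
            · exact he
            · rw [hp2 v hv, hpure v hv]
          simp only [Polynomial.coeff_C_mul, Polynomial.coeff_X_pow, if_neg (Ne.symm hkk), mul_zero]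
        · simp
      · intro hmm; exact absurd hm hmm
    change (psi A k) p = 0 at hp
    rw [hp] at key
    simp only [Polynomial.coeff_zero] at key
    exact (mem_support_iff.mp hm) key.symm
  · rw [Ideal.span_le]
    rintro _ ⟨v, hv, rfl⟩
    simp only [SetLike.mem_coe, RingHom.mem_ker]
    change (psi A k) (X v) = 0
    have : v ≠ k := hv
    simp [psi, this]

lemma wEdgeIdeal_eq (w : Sym2 (Fin 3) → ℕ) :
    wEdgeIdeal A (cycleG 3) w = Ideal.span ((fun s => monomial s (1 : A)) ''
      {Finsupp.single 0 (w s(0,1)) + Finsupp.single 1 (w s(0,1)),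
       Finsupp.single 1 (w s(1,2)) + Finsupp.single 2 (w s(1,2)),
       Finsupp.single 2 (w s(2,0)) + Finsupp.single 0 (w s(2,0))}) := by
  unfold wEdgeIdeal
  congr 1
  ext f
  simp only [Set.mem_setOf_eq, Set.mem_image, Set.mem_insert_iff, Set.mem_singleton_iff]
  constructor
  · rintro ⟨i, j, hadj, rfl⟩
    rcases (adj_iff i j).mp hadj with ⟨rfl, rfl⟩ | ⟨rfl, rfl⟩ | ⟨rfl, rfl⟩ | ⟨rfl, rfl⟩ |
      ⟨rfl, rfl⟩ | ⟨rfl, rfl⟩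
    · exact ⟨_, Or.inl rfl, (X_pow_mul_X_pow 0 1 _).symm⟩
    · refine ⟨_, Or.inl rfl, ?_⟩
      rw [(Sym2.eq_swap : s((1:Fin 3),(0:Fin 3)) = s(0,1)), mul_comm, X_pow_mul_X_pow]
    · exact ⟨_, Or.inr (Or.inl rfl), (X_pow_mul_X_pow 1 2 _).symm⟩
    · refine ⟨_, Or.inr (Or.inl rfl), ?_⟩
      rw [(Sym2.eq_swap : s((2:Fin 3),(1:Fin 3)) = s(1,2)), mul_comm, X_pow_mul_X_pow]
    · exact ⟨_, Or.inr (Or.inr rfl), (X_pow_mul_X_pow 2 0 _).symm⟩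
    · refine ⟨_, Or.inr (Or.inr rfl), ?_⟩
      rw [(Sym2.eq_swap : s((0:Fin 3),(2:Fin 3)) = s(2,0)), mul_comm, X_pow_mul_X_pow]
  · rintro ⟨n, hn | hn | hn, rfl⟩ <;> subst hn
    · exact ⟨0, 1, (adj_iff 0 1).mpr (by tauto), (X_pow_mul_X_pow 0 1 _).symm⟩
    · exact ⟨1, 2, (adj_iff 1 2).mpr (by tauto), (X_pow_mul_X_pow 1 2 _).symm⟩
    · exact ⟨2, 0, (adj_iff 2 0).mpr (by tauto), (X_pow_mul_X_pow 2 0 _).symm⟩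

lemma mem_wEdgeIdeal_iff (w : Sym2 (Fin 3) → ℕ) (f : MvPolynomial (Fin 3) A) :
    f ∈ wEdgeIdeal A (cycleG 3) w ↔ ∀ m ∈ f.support,
      (w s(0,1) ≤ m 0 ∧ w s(0,1) ≤ m 1) ∨ (w s(1,2) ≤ m 1 ∧ w s(1,2) ≤ m 2) ∨
      (w s(2,0) ≤ m 2 ∧ w s(2,0) ≤ m 0) := by
  rw [wEdgeIdeal_eq, mem_ideal_span_monomial_image]
  refine forall₂_congr fun m hm => ?_
  constructor
  · rintro ⟨si, hsi, hle⟩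
    simp only [Set.mem_insert_iff, Set.mem_singleton_iff] at hsi
    rcases hsi with rfl | rfl | rfl
    · exact Or.inl ((single_add_single_le (by decide) _ _ m).mp hle)
    · exact Or.inr (Or.inl ((single_add_single_le (by decide) _ _ m).mp hle))
    · refine Or.inr (Or.inr ?_)
      exact (single_add_single_le (by decide) _ _ m).mp hle
  · rintro (⟨h1, h2⟩ | ⟨h1, h2⟩ | ⟨h1, h2⟩)
    · exact ⟨_, Or.inl rfl, (single_add_single_le (by decide) _ _ m).mpr ⟨h1, h2⟩⟩
    · exact ⟨_, Or.inr (Or.inl rfl), (single_add_single_le (by decide) _ _ m).mpr ⟨h1, h2⟩⟩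
    · exact ⟨_, Or.inr (Or.inr rfl), (single_add_single_le (by decide) _ _ m).mpr ⟨h1, h2⟩⟩
lemma support_cond_of_mul (i j k : Fin 3) (hij : i ≠ j) (hik : i ≠ k) (hjk : j ≠ k)
    (α β : ℕ) (g : MvPolynomial (Fin 3) A)
    (h : ∀ m ∈ ((X 0 + X 1 + X 2 : MvPolynomial (Fin 3) A) * g).support,
        α ≤ m i ∨ β ≤ m j) :
    ∀ m ∈ g.support, α ≤ m i ∨ β ≤ m j := by
  by_contra hcon
  push_neg at hcon
  obtain ⟨m0, hm0s, hm0i, hm0j⟩ := hcon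
  have hTne : (g.support.filter (fun m => m i < α ∧ m j < β)).Nonempty :=
    ⟨m0, Finset.mem_filter.mpr ⟨hm0s, hm0i, hm0j⟩⟩
  obtain ⟨m, hmT, hmax⟩ :=
    Finset.exists_max_image (g.support.filter (fun m => m i < α ∧ m j < β)) (fun m => m k) hTne
  rw [Finset.mem_filter] at hmT
  have hms := hmT.1
  have hmi := hmT.2.1
  have hmj := hmT.2.2
  set n := m + Finsupp.single k 1 with hn
  have hni : n i = m i := by simp [hn, Finsupp.single_apply, Ne.symm hik]
  have hnj : n j = m j := by simp [hn, Finsupp.single_apply, Ne.symm hjk]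
  have hnk : n k = m k + 1 := by simp [hn]
  have hsum : (X 0 + X 1 + X 2 : MvPolynomial (Fin 3) A) = X i + X j + X k := by
    fin_cases i <;> fin_cases j <;> fin_cases k <;> simp_all <;> ring
  have hzero : ∀ v : Fin 3, v ≠ k → coeff n (X v * g) = 0 := by
    intro v hvk
    rw [coeff_X_mul']
    split_ifs with hmem
    · by_contra hne0
      set m' : Fin 3 →₀ ℕ := n - Finsupp.single v 1 with hm'
      have hsup : m' ∈ g.support := mem_support_iff.mpr hne0
      have hvi : m' i ≤ m i := by
        rw [hm', Finsupp.tsub_apply, hni]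
        exact Nat.sub_le _ _
      have hvj : m' j ≤ m j := by
        rw [hm', Finsupp.tsub_apply, hnj]
        exact Nat.sub_le _ _
      have hvk' : m' k = m k + 1 := by
        rw [hm', Finsupp.tsub_apply, hnk, Finsupp.single_apply, if_neg hvk]
        rfl
      have hmem' : m' ∈ g.support.filter (fun m => m i < α ∧ m j < β) :=
        Finset.mem_filter.mpr ⟨hsup, lt_of_le_of_lt hvi hmi, lt_of_le_of_lt hvj hmj⟩
      have := hmax _ hmem'
      omega
    · rfl
  have hco : coeff n ((X 0 + X 1 + X 2 : MvPolynomial (Fin 3) A) * g) = coeff m g := by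
    rw [hsum, add_mul, add_mul, coeff_add, coeff_add, hzero i hik, hzero j hjk,
      coeff_X_mul']
    have hksup : k ∈ n.support := by
      rw [Finsupp.mem_support_iff, hnk]; omega
    rw [if_pos hksup]
    have hnm : n - Finsupp.single k 1 = m := by
      ext v
      rw [Finsupp.tsub_apply]
      rcases eq_or_ne v k with rfl | hvk
      · rw [hnk]; simp
      · rw [hn]
        simp [Finsupp.add_apply, Finsupp.single_apply, Ne.symm hvk]
    rw [hnm]
    ring
  have hnsup : n ∈ ((X 0 + X 1 + X 2 : MvPolynomial (Fin 3) A) * g).support := by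
    rw [mem_support_iff, hco]
    exact mem_support_iff.mp hms
  have := h n hnsup
  omega

lemma mul_reg (w : Sym2 (Fin 3) → ℕ) (g : MvPolynomial (Fin 3) A)
    (h : (X 0 + X 1 + X 2 : MvPolynomial (Fin 3) A) * g ∈ wEdgeIdeal A (cycleG 3) w) :
    g ∈ wEdgeIdeal A (cycleG 3) w := by
  rw [mem_wEdgeIdeal_iff] at h ⊢
  have c1 := support_cond_of_mul 0 1 2 (by decide) (by decide) (by decide)
    (min (w s(0,1)) (w s(2,0))) (w s(1,2)) g (fun m hm => by have := h m hm; omega)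
  have c2 := support_cond_of_mul 0 2 1 (by decide) (by decide) (by decide)
    (w s(0,1)) (min (w s(1,2)) (w s(2,0))) g (fun m hm => by have := h m hm; omega)
  have c3 := support_cond_of_mul 0 2 1 (by decide) (by decide) (by decide)
    (min (w s(0,1)) (w s(2,0))) (w s(1,2)) g (fun m hm => by have := h m hm; omega)
  have c4 := support_cond_of_mul 1 2 0 (by decide) (by decide) (by decide)
    (min (w s(0,1)) (w s(1,2))) (w s(2,0)) g (fun m hm => by have := h m hm; omega)
  have c5 := support_cond_of_mul 1 0 2 (by decide) (by decide) (by decide)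
    (min (w s(0,1)) (w s(1,2))) (w s(2,0)) g (fun m hm => by have := h m hm; omega)
  have c6 := support_cond_of_mul 1 2 0 (by decide) (by decide) (by decide)
    (w s(0,1)) (min (w s(1,2)) (w s(2,0))) g (fun m hm => by have := h m hm; omega)
  intro m hm
  have h1 := c1 m hm
  have h2 := c2 m hm
  have h3 := c3 m hm
  have h4 := c4 m hm
  have h5 := c5 m hm
  have h6 := c6 m hm
  omega
lemma span_range_X_eq_ker :
    Ideal.span (Set.range (X : Fin 3 → MvPolynomial (Fin 3) A)) =
      RingHom.ker (constantCoeff : MvPolynomial (Fin 3) A →+* A) := by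
  apply le_antisymm
  · rw [Ideal.span_le]
    rintro _ ⟨v, rfl⟩
    simp [RingHom.mem_ker]
  · intro p hp
    rw [RingHom.mem_ker] at hp
    rw [← Set.image_univ, mem_ideal_span_X_image]
    intro m hm
    by_contra hc
    push_neg at hc
    have hm0 : m = 0 := by
      ext v
      exact hc v (Set.mem_univ v)
    rw [hm0, mem_support_iff] at hm
    apply hm
    rw [← constantCoeff_eq] at *
    exact hp

lemma prime_span_missing (k : Fin 3) :
    (Ideal.span (X '' {v : Fin 3 | v ≠ k}) : Ideal (MvPolynomial (Fin 3) A)).IsPrime := by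
  rw [← ker_psi k]
  exact RingHom.ker_isPrime _

lemma prime_span_range :
    (Ideal.span (Set.range (X : Fin 3 → MvPolynomial (Fin 3) A))).IsPrime := by
  rw [span_range_X_eq_ker]
  exact RingHom.ker_isPrime _

lemma no_three_primes (P0 P1 P2 : Ideal (MvPolynomial (Fin 3) A))
    (hp1 : P1.IsPrime) (hp2 : P2.IsPrime)
    (h01 : P0 < P1) (h12 : P1 < P2)
    (hk : ∃ k : Fin 3, ∀ v, v ≠ k → X v ∈ P0) : False := by
  obtain ⟨k, hk⟩ := hk
  set f := (psi A k).toRingHom with hf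
  have hsurj : Function.Surjective f := fun p => ⟨_, psi_comp k p⟩
  have hker : RingHom.ker f ≤ P0 := by
    rw [hf, ker_psi, Ideal.span_le]
    rintro _ ⟨v, hv, rfl⟩
    exact hk v hv
  have hker1 : RingHom.ker f ≤ P1 := hker.trans h01.le
  have hker2 : RingHom.ker f ≤ P2 := hker1.trans h12.le
  have hmap1 : (P1.map f).IsPrime := Ideal.map_isPrime_of_surjective hsurj hker1
  have hmap2 : (P2.map f).IsPrime := Ideal.map_isPrime_of_surjective hsurj hker2
  have hcm : ∀ P : Ideal (MvPolynomial (Fin 3) A), RingHom.ker f ≤ P →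
      Ideal.comap f (Ideal.map f P) = P := by
    intro P hP
    rw [Ideal.comap_map_of_surjective f hsurj]
    exact sup_eq_left.mpr hP
  have hlt12 : P1.map f < P2.map f := by
    refine lt_of_le_of_ne (Ideal.map_mono h12.le) fun he => h12.ne ?_
    have := congrArg (Ideal.comap f) he
    rwa [hcm P1 hker1, hcm P2 hker2] at this
  have hne_bot : P1.map f ≠ ⊥ := by
    intro hb
    have h1 : P1 ≤ Ideal.comap f (P1.map f) := Ideal.le_comap_map
    rw [hb] at h1
    have h2 : P1 ≤ RingHom.ker f := by
      intro x hx
      exact (Ideal.mem_comap.mp (h1 hx) : f x ∈ ⊥)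
    exact (lt_of_le_of_lt (h2.trans hker) h01).ne rfl
  haveI := hmap1
  have hmax : (P1.map f).IsMaximal := IsPrime.to_maximal_ideal hne_bot
  exact hlt12.ne (hmax.eq_of_le hmap2.ne_top hlt12.le)
end Stmt17Aux


open Stmt17Aux in
open scoped Pointwise in
set_option maxHeartbeats 1000000 in
set_option synthInstance.maxHeartbeats 1000000 in
/-- every weighted 3-cycle is Cohen-Macaulay. -/
theorem stmt_17 (A : Type*) [Field A] (w : Sym2 (Fin 3) → ℕ)
    (hw : ∀ e ∈ (cycleG 3).edgeSet, 1 ≤ w e) :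
    QuotIsCM A (wEdgeIdeal A (cycleG 3) w) := by
  classical
  set Iw := wEdgeIdeal A (cycleG 3) w with hIw
  have adj01 : (cycleG 3).Adj 0 1 := (adj_iff 0 1).mpr (by tauto)
  have adj12 : (cycleG 3).Adj 1 2 := (adj_iff 1 2).mpr (by tauto)
  have adj20 : (cycleG 3).Adj 2 0 := (adj_iff 2 0).mpr (by tauto)
  -- constantCoeff kills Iw
  have hIker : Iw ≤ RingHom.ker (constantCoeff : MvPolynomial (Fin 3) A →+* A) := by
    rw [hIw]
    unfold wEdgeIdeal
    rw [Ideal.span_le]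
    rintro _ ⟨i, j, hadj, rfl⟩
    have hww : 1 ≤ w s(i,j) := hw _ ((cycleG 3).mem_edgeSet.mpr hadj)
    have hne : w s(i,j) ≠ 0 := by omega
    simp [RingHom.mem_ker, zero_pow hne]
  have hInetop : Iw ≠ ⊤ := by
    intro h
    have h1 : (1 : MvPolynomial (Fin 3) A) ∈ Iw := h ▸ Submodule.mem_top
    have h2 := hIker h1
    rw [RingHom.mem_ker, map_one] at h2
    exact one_ne_zero h2
  haveI : Nontrivial (MvPolynomial (Fin 3) A ⧸ Iw) := Ideal.Quotient.nontrivial_iff.mpr hInetop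
  set mkQ := Ideal.Quotient.mk Iw with hmkQ
  set s : MvPolynomial (Fin 3) A := X 0 + X 1 + X 2 with hs
  -- χ : quotient → A
  set χ : MvPolynomial (Fin 3) A ⧸ Iw →+* A :=
    Ideal.Quotient.lift Iw constantCoeff (fun x hx => RingHom.mem_ker.mp (hIker hx)) with hχ
  have hχs : χ (mkQ s) = 0 := by
    rw [hmkQ, hχ, Ideal.Quotient.lift_mk, hs]
    simp
  -- regularity of s on the quotient
  have hsreg : IsSMulRegular (MvPolynomial (Fin 3) A ⧸ Iw) (mkQ s) := by
    intro q1 q2 hq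
    obtain ⟨x, rfl⟩ := Ideal.Quotient.mk_surjective q1
    obtain ⟨y, rfl⟩ := Ideal.Quotient.mk_surjective q2
    have hq' : mkQ (s * x) = mkQ (s * y) := by
      simpa [smul_eq_mul, map_mul] using hq
    rw [hmkQ, Ideal.Quotient.eq] at hq'
    have hsub : s * (x - y) ∈ Iw := by
      rw [mul_sub]; exact hq'
    have := mul_reg w (x - y) (by rw [← hs] at *; exact hsub)
    rw [Ideal.Quotient.eq]
    exact this
  -- QuotSMulTop is nontrivial
  have hsm : (mkQ s • (⊤ : Submodule (MvPolynomial (Fin 3) A ⧸ Iw)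
      (MvPolynomial (Fin 3) A ⧸ Iw))) ≠ ⊤ := by
    intro htop
    have h1 : (1 : MvPolynomial (Fin 3) A ⧸ Iw) ∈
        (mkQ s • (⊤ : Submodule (MvPolynomial (Fin 3) A ⧸ Iw)
          (MvPolynomial (Fin 3) A ⧸ Iw))) := by rw [htop]; exact Submodule.mem_top
    rw [← SetLike.mem_coe, Submodule.coe_pointwise_smul] at h1
    obtain ⟨y, -, hy⟩ := Set.mem_smul_set.mp h1
    have hu : IsUnit (mkQ s) := IsUnit.of_mul_eq_one y (by rw [← smul_eq_mul]; exact hy)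
    have := hu.map χ
    rw [hχs] at this
    exact not_isUnit_zero this
  haveI : Nontrivial (QuotSMulTop (mkQ s) (MvPolynomial (Fin 3) A ⧸ Iw)) :=
    Submodule.Quotient.nontrivial_iff.mpr hsm
  -- dimension: lower bound
  set P0 : Ideal (MvPolynomial (Fin 3) A) := Ideal.span (X '' {v : Fin 3 | v ≠ 2}) with hP0
  set P1 : Ideal (MvPolynomial (Fin 3) A) := Ideal.span (Set.range X) with hP1
  haveI hP0p : P0.IsPrime := prime_span_missing 2
  haveI hP1p : P1.IsPrime := prime_span_range
  have hIP0 : Iw ≤ P0 := by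
    rw [hIw]
    unfold wEdgeIdeal
    rw [Ideal.span_le]
    rintro _ ⟨i, j, hadj, rfl⟩
    have hww : 1 ≤ w s(i,j) := hw _ ((cycleG 3).mem_edgeSet.mpr hadj)
    have hne := hadj.ne
    rcases eq_or_ne i 2 with rfl | hi
    · have hj : j ≠ 2 := fun h => hne (h ▸ rfl)
      exact Ideal.mul_mem_left _ _
        (Ideal.pow_mem_of_mem P0 (Ideal.subset_span (Set.mem_image_of_mem X hj)) _ (by omega))
    · exact Ideal.mul_mem_right _ _
        (Ideal.pow_mem_of_mem P0 (Ideal.subset_span (Set.mem_image_of_mem X hi)) _ (by omega))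
  have hX2P1 : (X 2 : MvPolynomial (Fin 3) A) ∈ P1 := Ideal.subset_span ⟨2, rfl⟩
  have hX2P0 : (X 2 : MvPolynomial (Fin 3) A) ∉ P0 := by
    intro h2
    rw [hP0, mem_ideal_span_X_image] at h2
    obtain ⟨v, hv, hvne⟩ := h2 (Finsupp.single 2 1) (by rw [support_X]; simp)
    rw [Finsupp.single_apply] at hvne
    rcases eq_or_ne (2 : Fin 3) v with rfl | hne2
    · exact hv rfl
    · rw [if_neg hne2] at hvne
      exact hvne rfl
  have hP0P1 : P0 < P1 := by
    refine lt_of_le_of_ne (Ideal.span_mono ?_) fun he => hX2P0 (he ▸ hX2P1)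
    rintro _ ⟨v, -, rfl⟩
    exact ⟨v, rfl⟩
  have hkerQ : RingHom.ker mkQ = Iw := Ideal.mk_ker
  haveI hQ0p : (P0.map mkQ).IsPrime :=
    Ideal.map_isPrime_of_surjective Ideal.Quotient.mk_surjective (hkerQ.le.trans hIP0)
  haveI hQ1p : (P1.map mkQ).IsPrime :=
    Ideal.map_isPrime_of_surjective Ideal.Quotient.mk_surjective
      (hkerQ.le.trans (hIP0.trans hP0P1.le))
  have hQ01 : P0.map mkQ < P1.map mkQ := by
    refine lt_of_le_of_ne (Ideal.map_mono hP0P1.le) fun he => hP0P1.ne ?_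
    have e0 : Ideal.comap mkQ (Ideal.map mkQ P0) = P0 := by
      rw [Ideal.comap_map_of_surjective mkQ Ideal.Quotient.mk_surjective]
      exact sup_eq_left.mpr (hkerQ.le.trans hIP0)
    have e1 : Ideal.comap mkQ (Ideal.map mkQ P1) = P1 := by
      rw [Ideal.comap_map_of_surjective mkQ Ideal.Quotient.mk_surjective]
      exact sup_eq_left.mpr (hkerQ.le.trans (hIP0.trans hP0P1.le))
    have hc := congrArg (Ideal.comap mkQ) he
    rw [e0, e1] at hc
    exact hc
  set chain : LTSeries (PrimeSpectrum (MvPolynomial (Fin 3) A ⧸ Iw)) :=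
    (RelSeries.singleton _ ⟨P0.map mkQ, hQ0p⟩).snoc ⟨P1.map mkQ, hQ1p⟩
      (by
        show (⟨P0.map mkQ, hQ0p⟩ : PrimeSpectrum _) < ⟨P1.map mkQ, hQ1p⟩
        exact (PrimeSpectrum.asIdeal_lt_asIdeal _ _).mp hQ01) with hchain
  have hge : ((1 : ℕ) : WithBot (WithTop ℕ)) ≤ ringKrullDim (MvPolynomial (Fin 3) A ⧸ Iw) := by
    have := Order.LTSeries.length_le_krullDim chain
    rw [hchain] at this
    simp at this
    exact this
  -- dimension: upper bound
  have hle : ringKrullDim (MvPolynomial (Fin 3) A ⧸ Iw) ≤ ((1 : ℕ) : WithBot (WithTop ℕ)) := by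
    rw [ringKrullDim, Order.krullDim_eq_iSup_length]
    have hsup : (⨆ (p : LTSeries (PrimeSpectrum (MvPolynomial (Fin 3) A ⧸ Iw))),
        (p.length : ℕ∞)) ≤ (1 : ℕ∞) := by
      apply iSup_le
      intro p
      by_contra hgt
      push_neg at hgt
      have h2 : 2 ≤ p.length := by exact_mod_cast hgt
      have l01 : p ⟨0, by omega⟩ < p ⟨1, by omega⟩ := p.strictMono (by simp [Fin.lt_def])
      have l12 : p ⟨1, by omega⟩ < p ⟨2, by omega⟩ := p.strictMono (by simp [Fin.lt_def])
      set C0 := (p ⟨0, by omega⟩).asIdeal.comap mkQ with hC0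
      set C1 := (p ⟨1, by omega⟩).asIdeal.comap mkQ with hC1
      set C2 := (p ⟨2, by omega⟩).asIdeal.comap mkQ with hC2
      haveI hC0p : C0.IsPrime := Ideal.IsPrime.comap _
      haveI hC1p : C1.IsPrime := Ideal.IsPrime.comap _
      haveI hC2p : C2.IsPrime := Ideal.IsPrime.comap _
      have hstrict : ∀ x y : PrimeSpectrum (MvPolynomial (Fin 3) A ⧸ Iw), x < y →
          x.asIdeal.comap mkQ < y.asIdeal.comap mkQ := by
        intro x y hxy
        refine lt_of_le_of_ne (Ideal.comap_mono ((PrimeSpectrum.asIdeal_lt_asIdeal x y).mpr hxy).le)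
          fun he => ((PrimeSpectrum.asIdeal_lt_asIdeal x y).mpr hxy).ne ?_
        have hc := congrArg (Ideal.map mkQ) he
        rwa [Ideal.map_comap_of_surjective mkQ Ideal.Quotient.mk_surjective,
          Ideal.map_comap_of_surjective mkQ Ideal.Quotient.mk_surjective] at hc
      have hC01 : C0 < C1 := hstrict _ _ l01
      have hC12 : C1 < C2 := hstrict _ _ l12
      have hIC0 : Iw ≤ C0 := by
        intro x hx
        rw [hC0, Ideal.mem_comap]
        have : mkQ x = 0 := Ideal.Quotient.eq_zero_iff_mem.mpr hx
        rw [this]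
        exact zero_mem _
      have g01 : (X 0 : MvPolynomial (Fin 3) A) ^ w s(0,1) * X 1 ^ w s(0,1) ∈ Iw := by
        rw [hIw]; unfold wEdgeIdeal; exact Ideal.subset_span ⟨0, 1, adj01, rfl⟩
      have g12 : (X 1 : MvPolynomial (Fin 3) A) ^ w s(1,2) * X 2 ^ w s(1,2) ∈ Iw := by
        rw [hIw]; unfold wEdgeIdeal; exact Ideal.subset_span ⟨1, 2, adj12, rfl⟩
      have g20 : (X 2 : MvPolynomial (Fin 3) A) ^ w s(2,0) * X 0 ^ w s(2,0) ∈ Iw := by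
        rw [hIw]; unfold wEdgeIdeal; exact Ideal.subset_span ⟨2, 0, adj20, rfl⟩
      have d01 : (X 0 : MvPolynomial (Fin 3) A) ∈ C0 ∨ (X 1 : MvPolynomial (Fin 3) A) ∈ C0 :=
        (hC0p.mem_or_mem (hIC0 g01)).imp (hC0p.mem_of_pow_mem _) (hC0p.mem_of_pow_mem _)
      have d12 : (X 1 : MvPolynomial (Fin 3) A) ∈ C0 ∨ (X 2 : MvPolynomial (Fin 3) A) ∈ C0 :=
        (hC0p.mem_or_mem (hIC0 g12)).imp (hC0p.mem_of_pow_mem _) (hC0p.mem_of_pow_mem _)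
      have d20 : (X 2 : MvPolynomial (Fin 3) A) ∈ C0 ∨ (X 0 : MvPolynomial (Fin 3) A) ∈ C0 :=
        (hC0p.mem_or_mem (hIC0 g20)).imp (hC0p.mem_of_pow_mem _) (hC0p.mem_of_pow_mem _)
      have hex : ∃ k : Fin 3, ∀ v, v ≠ k → X v ∈ C0 := by
        rcases d01 with h0 | h1 <;> rcases d12 with h1' | h2' <;> rcases d20 with h2'' | h0''
        · exact ⟨2, fun v hv => by fin_cases v <;> simp_all⟩
        · exact ⟨2, fun v hv => by fin_cases v <;> simp_all⟩
        · exact ⟨1, fun v hv => by fin_cases v <;> simp_all⟩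
        · exact ⟨1, fun v hv => by fin_cases v <;> simp_all⟩
        · exact ⟨0, fun v hv => by fin_cases v <;> simp_all⟩
        · exact ⟨2, fun v hv => by fin_cases v <;> simp_all⟩
        · exact ⟨0, fun v hv => by fin_cases v <;> simp_all⟩
        · exact ⟨0, fun v hv => by fin_cases v <;> simp_all⟩
      exact no_three_primes C0 C1 C2 hC1p hC2p hC01 hC12 hex
    rw [show ((1:ℕ) : WithBot (WithTop ℕ)) = ((1 : ℕ∞) : WithBot ℕ∞) by norm_num; rfl]
    exact WithBot.coe_le_coe.mpr hsup
  have hdim : ringKrullDim (MvPolynomial (Fin 3) A ⧸ Iw) = ((1:ℕ) : WithBot (WithTop ℕ)) :=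
    le_antisymm hle hge
  -- assemble
  refine ⟨[mkQ s], ?_, ?_, ?_⟩
  · intro x hx
    rw [List.mem_singleton] at hx
    subst hx
    refine Ideal.mem_map_of_mem _ ?_
    rw [hs]
    refine Submodule.add_mem _ (Submodule.add_mem _ ?_ ?_) ?_ <;>
      exact Ideal.subset_span ⟨_, rfl⟩
  · exact RingTheory.Sequence.IsRegular.cons hsreg (RingTheory.Sequence.IsRegular.nil _ _)
  · rw [hdim]
    simp
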